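/- Let (V,g) be a 4-dimensional vector space with a neutral inner product, {J₊, K, S₊} a para-hyperhermitian triple (J₊²=-Id, K²=S₊²=Id, S₊=J₊K, g(J₊·,J₊·)=g, g(K·,K·)=g(S₊·,S₊·)=-g), and J₋ with J₊J₋+J₋J₊=-2a·Id, a>1, J₋ = aJ₊ - √(a²-1) S₊. Define ω₊(X,Y)=√((a+1)/(a-1))·g(J₊X - J₋X, Y), ω₋(X,Y)=√((a-1)/(a+1))·g(J₊X + J₋X, Y), F^K(X,Y)=g(KX,Y). Then for any X with g(X,X)=1, evaluating on the basis {X, J₊X, KX, S₊X}: ω±(X,J₊X) = ∓√(a²-1), ω±(X,KX) = 0, ω±(X,S₊X) = ∓(a±1), and hence F^K∧ω₊ = F^K∧ω₋ = ω₊∧ω₋ = 0 and ω₊² + ω₋² = 4(F^K)². -/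

import Mathlib

open Module

/-- Wedge product of two 2-forms evaluated on four vectors. -/
def wedge2 {V : Type*} (α β : V → V → ℝ) (x₁ x₂ x₃ x₄ : V) : ℝ :=
  α x₁ x₂ * β x₃ x₄ - α x₁ x₃ * β x₂ x₄ + α x₁ x₄ * β x₂ x₃ +
    α x₃ x₄ * β x₁ x₂ - α x₂ x₄ * β x₁ x₃ + α x₂ x₃ * β x₁ x₄

theorem stmt13 (V : Type*) [AddCommGroup V] [Module ℝ V] [FiniteDimensional ℝ V]
    (hdim : finrank ℝ V = 4)
    (g : LinearMap.BilinForm ℝ V)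
    (hsymm : ∀ x y, g x y = g y x)
    (e : Basis (Fin 4) ℝ V)
    (hsig : ∀ i j, g (e i) (e j) =
      if i = j then (if (i : ℕ) < 2 then (1 : ℝ) else -1) else 0)
    (Jp K Sp : Module.End ℝ V)
    (hJp : Jp * Jp = -1) (hK : K * K = 1) (hSp : Sp * Sp = 1)
    (hJK : Jp * K = Sp) (hKJ : K * Jp = -Sp)
    (hgJ : ∀ x y, g (Jp x) (Jp y) = g x y)
    (hgK : ∀ x y, g (K x) (K y) = - g x y)
    (hgS : ∀ x y, g (Sp x) (Sp y) = - g x y)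
    (a : ℝ) (ha : 1 < a) :
    let Jm : Module.End ℝ V := a • Jp - Real.sqrt (a ^ 2 - 1) • Sp
    let FK : V → V → ℝ := fun x y => g (K x) y
    let ωp : V → V → ℝ := fun x y =>
      Real.sqrt ((a + 1) / (a - 1)) * (g (Jp x) y - g (Jm x) y)
    let ωm : V → V → ℝ := fun x y =>
      Real.sqrt ((a - 1) / (a + 1)) * (g (Jp x) y + g (Jm x) y)
    (Jp * Jm + Jm * Jp = (-(2 * a)) • (1 : Module.End ℝ V)) ∧
    (∀ X : V, g X X = 1 →
      ωp X (Jp X) = -Real.sqrt (a ^ 2 - 1) ∧ ωm X (Jp X) = Real.sqrt (a ^ 2 - 1) ∧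
      ωp X (K X) = 0 ∧ ωm X (K X) = 0 ∧
      ωp X (Sp X) = -(a + 1) ∧ ωm X (Sp X) = a - 1) ∧
    (∀ x₁ x₂ x₃ x₄ : V,
      wedge2 FK ωp x₁ x₂ x₃ x₄ = 0 ∧ wedge2 FK ωm x₁ x₂ x₃ x₄ = 0 ∧
      wedge2 ωp ωm x₁ x₂ x₃ x₄ = 0 ∧
      wedge2 ωp ωp x₁ x₂ x₃ x₄ + wedge2 ωm ωm x₁ x₂ x₃ x₄ =
        4 * wedge2 FK FK x₁ x₂ x₃ x₄) := by
  intro Jm FK ωp ωm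
  have hJm_def : Jm = a • Jp - Real.sqrt (a ^ 2 - 1) • Sp := rfl
  have hFK_def : ∀ x y, FK x y = g (K x) y := fun _ _ => rfl
  have hωp_def : ∀ x y, ωp x y =
      Real.sqrt ((a + 1) / (a - 1)) * (g (Jp x) y - g (Jm x) y) := fun _ _ => rfl
  have hωm_def : ∀ x y, ωm x y =
      Real.sqrt ((a - 1) / (a + 1)) * (g (Jp x) y + g (Jm x) y) := fun _ _ => rfl
  -- composition identities
  have hJS : Jp * Sp = -K := by rw [← hJK, ← mul_assoc, hJp, neg_one_mul]
  have hSJ : Sp * Jp = K := by rw [← hJK, mul_assoc, hKJ, mul_neg, hJS, neg_neg]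
  have hSK : Sp * K = Jp := by rw [← hJK, mul_assoc, hK, mul_one]
  have hKS : K * Sp = -Jp := by rw [← hJK, ← mul_assoc, hKJ, neg_mul, hSK]
  -- application versions
  have aJJ : ∀ x, Jp (Jp x) = -x := fun x => by
    simpa [Module.End.mul_apply, LinearMap.neg_apply, Module.End.one_apply] using
      DFunLike.congr_fun hJp x
  have aKK : ∀ x, K (K x) = x := fun x => by
    simpa [Module.End.mul_apply, Module.End.one_apply] using DFunLike.congr_fun hK x
  have aSS : ∀ x, Sp (Sp x) = x := fun x => by
    simpa [Module.End.mul_apply, Module.End.one_apply] using DFunLike.congr_fun hSp x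
  have aJK : ∀ x, Jp (K x) = Sp x := fun x => by
    simpa [Module.End.mul_apply] using DFunLike.congr_fun hJK x
  have aKJ : ∀ x, K (Jp x) = -(Sp x) := fun x => by
    simpa [Module.End.mul_apply, LinearMap.neg_apply] using DFunLike.congr_fun hKJ x
  have aJS : ∀ x, Jp (Sp x) = -(K x) := fun x => by
    simpa [Module.End.mul_apply, LinearMap.neg_apply] using DFunLike.congr_fun hJS x
  have aSJ : ∀ x, Sp (Jp x) = K x := fun x => by
    simpa [Module.End.mul_apply] using DFunLike.congr_fun hSJ x
  have aSK : ∀ x, Sp (K x) = Jp x := fun x => by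
    simpa [Module.End.mul_apply] using DFunLike.congr_fun hSK x
  have aKS : ∀ x, K (Sp x) = -(Jp x) := fun x => by
    simpa [Module.End.mul_apply, LinearMap.neg_apply] using DFunLike.congr_fun hKS x
  -- orthogonality lemmas
  have gJ0 : ∀ x, g (Jp x) x = 0 := by
    intro x
    have h := hgJ x (Jp x)
    rw [aJJ, map_neg] at h
    have h2 := hsymm x (Jp x)
    linarith
  have gK0 : ∀ x, g (K x) x = 0 := by
    intro x
    have h := hgK x (K x)
    rw [aKK] at h
    have h2 := hsymm x (K x)
    linarith
  have gS0 : ∀ x, g (Sp x) x = 0 := by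
    intro x
    have h := hgS x (Sp x)
    rw [aSS] at h
    have h2 := hsymm x (Sp x)
    linarith
  have gSK : ∀ x, g (Sp x) (K x) = 0 := by
    intro x
    have h := hgK (Jp x) x
    rw [aKJ x, gJ0 x, neg_zero, map_neg, LinearMap.neg_apply, neg_eq_zero] at h
    exact h
  have gKS : ∀ x, g (K x) (Sp x) = 0 := fun x => (hsymm _ _).trans (gSK x)
  have gJK0 : ∀ x, g (Jp x) (K x) = 0 := by
    intro x
    have h := hgJ x (-(Sp x))
    rw [map_neg, aJS, neg_neg] at h
    rw [map_neg] at h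
    have h2 := hsymm x (Sp x)
    have h3 := gS0 x
    linarith
  have gJS0 : ∀ x, g (Jp x) (Sp x) = 0 := by
    intro x
    have h := hgJ x (K x)
    rw [aJK] at h
    have h2 := hsymm x (K x)
    have h3 := gK0 x
    linarith
  -- scalar setup
  have ha1 : (0:ℝ) < a - 1 := by linarith
  have ha2 : (0:ℝ) < a + 1 := by linarith
  set p := Real.sqrt (a + 1) with hpdef
  set q := Real.sqrt (a - 1) with hqdef
  have hp2 : p ^ 2 = a + 1 := Real.sq_sqrt ha2.le
  have hq2 : q ^ 2 = a - 1 := Real.sq_sqrt ha1.le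
  have hq0 : q ≠ 0 := ne_of_gt (Real.sqrt_pos.mpr ha1)
  have hp0 : p ≠ 0 := ne_of_gt (Real.sqrt_pos.mpr ha2)
  have hs : Real.sqrt (a ^ 2 - 1) = p * q := by
    rw [show a ^ 2 - 1 = (a + 1) * (a - 1) by ring, Real.sqrt_mul ha2.le]
  have hrpq : Real.sqrt ((a + 1) / (a - 1)) = p / q := by
    rw [Real.sqrt_div ha2.le]
  have hrqp : Real.sqrt ((a - 1) / (a + 1)) = q / p := by
    rw [Real.sqrt_div ha1.le]
  have hJmval : ∀ x y, g (Jm x) y = a * g (Jp x) y - (p * q) * g (Sp x) y := by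
    intro x y
    rw [hJm_def, hs]
    simp only [LinearMap.sub_apply, LinearMap.smul_apply, map_sub, map_smul,
      smul_eq_mul]
  have hωp : ∀ x y, ωp x y = -(p * q) * g (Jp x) y + p ^ 2 * g (Sp x) y := by
    intro x y
    have c1 : p / q * (1 - a) = -(p * q) := by
      field_simp
      linear_combination hq2
    have c2 : p / q * (p * q) = p ^ 2 := by
      field_simp
    rw [hωp_def, hrpq, hJmval]
    calc p / q * (g (Jp x) y - (a * g (Jp x) y - p * q * g (Sp x) y))
        = (p / q * (1 - a)) * g (Jp x) y + (p / q * (p * q)) * g (Sp x) y := by ring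
      _ = -(p * q) * g (Jp x) y + p ^ 2 * g (Sp x) y := by rw [c1, c2]
  have hωm : ∀ x y, ωm x y = (p * q) * g (Jp x) y - q ^ 2 * g (Sp x) y := by
    intro x y
    have c3 : q / p * (1 + a) = p * q := by
      field_simp
      linear_combination (-1) * hp2
    have c4 : q / p * (p * q) = q ^ 2 := by
      field_simp
    rw [hωm_def, hrqp, hJmval]
    calc q / p * (g (Jp x) y + (a * g (Jp x) y - p * q * g (Sp x) y))
        = (q / p * (1 + a)) * g (Jp x) y - (q / p * (p * q)) * g (Sp x) y := by ring
      _ = (p * q) * g (Jp x) y - q ^ 2 * g (Sp x) y := by rw [c3, c4]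
  refine ⟨?_, ?_, ?_⟩
  · -- anticommutation
    rw [hJm_def, mul_sub, sub_mul, mul_smul_comm, mul_smul_comm, smul_mul_assoc,
      smul_mul_assoc, hJp, hJS, hSJ]
    module
  · -- evaluations on the adapted basis
    intro X hX
    have n1 : g (Jp X) (Jp X) = 1 := by rw [hgJ]; exact hX
    have n3 : g (Sp X) (Sp X) = -1 := by rw [hgS, hX]
    have o1 : g (Sp X) (Jp X) = 0 := (hsymm _ _).trans (gJS0 X)
    have o2 : g (Jp X) (K X) = 0 := gJK0 X
    have o3 : g (Sp X) (K X) = 0 := gSK X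
    have o4 : g (Jp X) (Sp X) = 0 := gJS0 X
    refine ⟨?_, ?_, ?_, ?_, ?_, ?_⟩
    · rw [hωp, n1, o1, hs]; ring
    · rw [hωm, n1, o1, hs]; ring
    · rw [hωp, o2, o3]; ring
    · rw [hωm, o2, o3]; ring
    · rw [hωp, o4, n3, ← hp2]; ring
    · rw [hωm, o4, n3, ← hq2]; ring
  · -- wedge identities
    set X0 := e 0 with hX0def
    have t00 : g X0 X0 = 1 := by rw [hX0def]; simpa using hsig 0 0
    set b1 := Jp X0 with hb1
    set b2 := K X0 with hb2
    set b3 := Sp X0 with hb3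
    have t11 : g b1 b1 = 1 := by rw [hb1, hgJ]; exact t00
    have t22 : g b2 b2 = -1 := by rw [hb2, hgK, t00]
    have t33 : g b3 b3 = -1 := by rw [hb3, hgS, t00]
    have t10 : g b1 X0 = 0 := by rw [hb1]; exact gJ0 X0
    have t01 : g X0 b1 = 0 := (hsymm _ _).trans t10
    have t20 : g b2 X0 = 0 := by rw [hb2]; exact gK0 X0
    have t02 : g X0 b2 = 0 := (hsymm _ _).trans t20
    have t30 : g b3 X0 = 0 := by rw [hb3]; exact gS0 X0
    have t03 : g X0 b3 = 0 := (hsymm _ _).trans t30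
    have t12 : g b1 b2 = 0 := by rw [hb1, hb2]; exact gJK0 X0
    have t21 : g b2 b1 = 0 := (hsymm _ _).trans t12
    have t13 : g b1 b3 = 0 := by rw [hb1, hb3]; exact gJS0 X0
    have t31 : g b3 b1 = 0 := (hsymm _ _).trans t13
    have t23 : g b2 b3 = 0 := by rw [hb2, hb3]; exact gKS X0
    have t32 : g b3 b2 = 0 := (hsymm _ _).trans t23
    have k0 : K X0 = b2 := hb2.symm
    have k1 : K b1 = -b3 := by rw [hb1, hb3]; exact aKJ X0
    have k2 : K b2 = X0 := by rw [hb2]; exact aKK X0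
    have k3 : K b3 = -b1 := by rw [hb3, hb1]; exact aKS X0
    have j0 : Jp X0 = b1 := hb1.symm
    have j1 : Jp b1 = -X0 := by rw [hb1]; exact aJJ X0
    have j2 : Jp b2 = b3 := by rw [hb2, hb3]; exact aJK X0
    have j3 : Jp b3 = -b2 := by rw [hb3, hb2]; exact aJS X0
    have s0 : Sp X0 = b3 := hb3.symm
    have s1 : Sp b1 = b2 := by rw [hb1, hb2]; exact aSJ X0
    have s2 : Sp b2 = b1 := by rw [hb2, hb1]; exact aSK X0
    have s3 : Sp b3 = X0 := by rw [hb3]; exact aSS X0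
    -- linear independence of the adapted frame
    have hli : LinearIndependent ℝ ![X0, b1, b2, b3] := by
      rw [Fintype.linearIndependent_iff]
      intro c hc
      have hc' : c 0 • X0 + c 1 • b1 + c 2 • b2 + c 3 • b3 = 0 := by
        have := hc
        rwa [Fin.sum_univ_four] at this
      have key : ∀ w : V, g (c 0 • X0 + c 1 • b1 + c 2 • b2 + c 3 • b3) w = 0 := by
        intro w
        rw [hc', map_zero, LinearMap.zero_apply]
      have h0 := key X0
      have h1 := key b1
      have h2 := key b2
      have h3 := key b3
      simp only [map_add, map_smul, LinearMap.add_apply, LinearMap.smul_apply,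
        smul_eq_mul, t00, t01, t02, t03, t10, t11, t12, t13, t20, t21, t22, t23,
        t30, t31, t32, t33, mul_one, mul_zero, mul_neg_one, add_zero, zero_add] at h0 h1 h2 h3
      intro i
      fin_cases i
      · simpa using h0
      · simpa using h1
      · simpa using h2 ▸ (by linarith [h2] : c 2 = 0)
      · simpa using (by linarith [h3] : c 3 = 0)
    set hb : Basis (Fin 4) ℝ V :=
      basisOfLinearIndependentOfCardEqFinrank hli (by simp [hdim]) with hbdef
    have hbe : ∀ i, hb i = ![X0, b1, b2, b3] i := fun i => by
      rw [hbdef, coe_basisOfLinearIndependentOfCardEqFinrank]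
    have hspan : ∀ x : V, ∃ u0 u1 u2 u3 : ℝ,
        x = u0 • X0 + u1 • b1 + u2 • b2 + u3 • b3 := by
      intro x
      refine ⟨hb.repr x 0, hb.repr x 1, hb.repr x 2, hb.repr x 3, ?_⟩
      have h := hb.sum_repr x
      rw [Fin.sum_univ_four, hbe 0, hbe 1, hbe 2, hbe 3] at h
      simpa using h.symm
    -- coordinate formulas for the three 2-forms
    have hFKf : ∀ u0 u1 u2 u3 v0 v1 v2 v3 : ℝ,
        FK (u0 • X0 + u1 • b1 + u2 • b2 + u3 • b3)
           (v0 • X0 + v1 • b1 + v2 • b2 + v3 • b3)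
        = u2 * v0 - u3 * v1 - u0 * v2 + u1 * v3 := by
      intro u0 u1 u2 u3 v0 v1 v2 v3
      rw [hFK_def]
      simp only [map_add, map_smul, map_neg, LinearMap.add_apply, LinearMap.smul_apply,
        LinearMap.neg_apply, smul_eq_mul, smul_neg, k0, k1, k2, k3,
        t00, t01, t02, t03, t10, t11, t12, t13, t20, t21, t22, t23, t30, t31, t32, t33]
      ring
    have hAf : ∀ u0 u1 u2 u3 v0 v1 v2 v3 : ℝ,
        g (Jp (u0 • X0 + u1 • b1 + u2 • b2 + u3 • b3))
          (v0 • X0 + v1 • b1 + v2 • b2 + v3 • b3)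
        = -(u1 * v0) + u0 * v1 + u3 * v2 - u2 * v3 := by
      intro u0 u1 u2 u3 v0 v1 v2 v3
      simp only [map_add, map_smul, map_neg, LinearMap.add_apply, LinearMap.smul_apply,
        LinearMap.neg_apply, smul_eq_mul, smul_neg, j0, j1, j2, j3,
        t00, t01, t02, t03, t10, t11, t12, t13, t20, t21, t22, t23, t30, t31, t32, t33]
      ring
    have hBf : ∀ u0 u1 u2 u3 v0 v1 v2 v3 : ℝ,
        g (Sp (u0 • X0 + u1 • b1 + u2 • b2 + u3 • b3))
          (v0 • X0 + v1 • b1 + v2 • b2 + v3 • b3)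
        = u3 * v0 + u2 * v1 - u1 * v2 - u0 * v3 := by
      intro u0 u1 u2 u3 v0 v1 v2 v3
      simp only [map_add, map_smul, map_neg, LinearMap.add_apply, LinearMap.smul_apply,
        LinearMap.neg_apply, smul_eq_mul, smul_neg, s0, s1, s2, s3,
        t00, t01, t02, t03, t10, t11, t12, t13, t20, t21, t22, t23, t30, t31, t32, t33]
      ring
    have hωpf : ∀ u0 u1 u2 u3 v0 v1 v2 v3 : ℝ,
        ωp (u0 • X0 + u1 • b1 + u2 • b2 + u3 • b3)
           (v0 • X0 + v1 • b1 + v2 • b2 + v3 • b3)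
        = -(p * q) * (-(u1 * v0) + u0 * v1 + u3 * v2 - u2 * v3)
          + p ^ 2 * (u3 * v0 + u2 * v1 - u1 * v2 - u0 * v3) := by
      intro u0 u1 u2 u3 v0 v1 v2 v3
      rw [hωp, hAf, hBf]
    have hωmf : ∀ u0 u1 u2 u3 v0 v1 v2 v3 : ℝ,
        ωm (u0 • X0 + u1 • b1 + u2 • b2 + u3 • b3)
           (v0 • X0 + v1 • b1 + v2 • b2 + v3 • b3)
        = (p * q) * (-(u1 * v0) + u0 * v1 + u3 * v2 - u2 * v3)
          - q ^ 2 * (u3 * v0 + u2 * v1 - u1 * v2 - u0 * v3) := by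
      intro u0 u1 u2 u3 v0 v1 v2 v3
      rw [hωm, hAf, hBf]
    intro x1 x2 x3 x4
    obtain ⟨u0, u1, u2, u3, hu⟩ := hspan x1
    obtain ⟨v0, v1, v2, v3, hv⟩ := hspan x2
    obtain ⟨w0, w1, w2, w3, hw⟩ := hspan x3
    obtain ⟨z0, z1, z2, z3, hz⟩ := hspan x4
    subst hu hv hw hz
    have hd : p ^ 2 - q ^ 2 = 2 := by rw [hp2, hq2]; ring
    refine ⟨?_, ?_, ?_, ?_⟩
    · simp only [wedge2, hFKf, hωpf]; ring
    · simp only [wedge2, hFKf, hωmf]; ring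
    · simp only [wedge2, hωpf, hωmf]; ring
    · simp only [wedge2, hFKf, hωpf, hωmf]
      linear_combination
        (2 * (u0 * (v1 * (w2 * z3 - w3 * z2) - v2 * (w1 * z3 - w3 * z1) + v3 * (w1 * z2 - w2 * z1))
          - u1 * (v0 * (w2 * z3 - w3 * z2) - v2 * (w0 * z3 - w3 * z0) + v3 * (w0 * z2 - w2 * z0))
          + u2 * (v0 * (w1 * z3 - w3 * z1) - v1 * (w0 * z3 - w3 * z0) + v3 * (w0 * z1 - w1 * z0))
          - u3 * (v0 * (w1 * z2 - w2 * z1) - v1 * (w0 * z2 - w2 * z0) + v2 * (w0 * z1 - w1 * z0)))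
          * (p ^ 2 - q ^ 2 + 2)) * hd
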